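/- For a bipartite pure state |E₁⟩ = Σ_i |i⟩_A ⊗ |φ_i⟩_B and |E₂⟩ = Σ_i |i⟩_A ⊗ |φ'_i⟩_B (with {|i⟩} an orthonormal basis of A), if Tr_B(|E₁⟩⟨E₂|) = 0 then Tr_A(|E₁⟩⟨E₁|) · Tr_A(|E₂⟩⟨E₂|) = 0, i.e., the reduced states on B have orthogonal supports. -/
import Mathlib


open Matrix
open scoped ComplexOrder

noncomputable section

/-- Partial trace over the first (A) factor. -/
def ptA {dA dB : ℕ} (M : Matrix (Fin dA × Fin dB) (Fin dA × Fin dB) ℂ) :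
    Matrix (Fin dB) (Fin dB) ℂ :=
  fun i j => ∑ k, M (k, i) (k, j)

/-- Partial trace over the second (B) factor. -/
def ptB {dA dB : ℕ} (M : Matrix (Fin dA × Fin dB) (Fin dA × Fin dB) ℂ) :
    Matrix (Fin dA) (Fin dA) ℂ :=
  fun i j => ∑ k, M (i, k) (j, k)

theorem stmt2 {dA dB : ℕ}
    (φ φ' : Fin dA → Fin dB → ℂ)
    (E₁ E₂ : Fin dA × Fin dB → ℂ)
    (hE₁ : E₁ = fun p => φ p.1 p.2)
    (hE₂ : E₂ = fun p => φ' p.1 p.2)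
    (h : ptB (vecMulVec E₁ (star E₂)) = 0) :
    ptA (vecMulVec E₁ (star E₁)) * ptA (vecMulVec E₂ (star E₂)) = 0 := by
  subst hE₁ hE₂
  have key : ∀ i j, (∑ k, φ i k * star (φ' j k)) = 0 := by
    intro i j
    have := congrFun (congrFun h i) j
    simpa [ptB, vecMulVec] using this
  have key' : ∀ i j, (∑ k, star (φ i k) * φ' j k) = 0 := by
    intro i j
    have := congrArg star (key i j)
    simpa [mul_comm] using this
  ext m n
  simp only [Matrix.mul_apply, ptA, vecMulVec_apply, Pi.star_apply, Matrix.zero_apply]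
  calc ∑ p, (∑ k, φ k m * star (φ k p)) * ∑ l, φ' l p * star (φ' l n)
      = ∑ p, ∑ k, ∑ l, (φ k m * star (φ' l n)) * (star (φ k p) * φ' l p) := by
        refine Finset.sum_congr rfl fun p _ => ?_
        rw [Finset.sum_mul_sum]
        exact Finset.sum_congr rfl fun k _ => Finset.sum_congr rfl fun l _ => by ring
    _ = ∑ k, ∑ l, (φ k m * star (φ' l n)) * ∑ p, (star (φ k p) * φ' l p) := by
        rw [Finset.sum_comm]
        refine Finset.sum_congr rfl fun k _ => ?_
        rw [Finset.sum_comm]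
        exact Finset.sum_congr rfl fun l _ => (Finset.mul_sum _ _ _).symm
    _ = 0 := by
        refine Finset.sum_eq_zero fun k _ => Finset.sum_eq_zero fun l _ => ?_
        rw [key', mul_zero]
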